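/- Let L_1, …, L_k be positive integers. Then every nonnegative integer less than or equal to L_1⋯L_k can be written as the sum of at most 2^{k−1} numbers of the form l_1⋯l_k with 1 ≤ l_i ≤ L_i for i = 1, …, k. -/

import Mathlib

theorem stmt8_aux : ∀ k, 1 ≤ k → ∀ (L : Fin k → ℕ), (∀ i, 0 < L i) →
    ∀ m, m ≤ ∏ i, L i →
    ∃ (r : ℕ) (f : Fin r → Fin k → ℕ), r ≤ 2 ^ (k - 1) ∧
      (∀ j i, 1 ≤ f j i ∧ f j i ≤ L i) ∧ m = ∑ j, ∏ i, f j i := by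
  intro k hk
  induction k, hk using Nat.le_induction with
  | base =>
    intro L hL m hm
    rcases Nat.eq_zero_or_pos m with rfl | hm1
    · exact ⟨0, Fin.elim0, by simp, fun j => j.elim0, by simp⟩
    · refine ⟨1, fun _ _ => m, le_refl _, fun j i => ⟨hm1, ?_⟩, by simp⟩
      obtain rfl : i = 0 := Subsingleton.elim i 0
      simpa using hm
  | succ k hk ih =>
    intro L hL m hm
    set P := ∏ i : Fin k, L i.succ with hP
    have hPpos : 0 < P := Finset.prod_pos fun i _ => hL i.succ
    have hprod : ∏ i, L i = L 0 * P := Fin.prod_univ_succ L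
    have h2 : 2 ^ (k - 1) ≤ 2 ^ (k + 1 - 1) :=
      Nat.pow_le_pow_right two_pos (by omega)
    have hb : 2 ^ (k - 1) + 1 ≤ 2 ^ (k + 1 - 1) := by
      have hk' : k - 1 + 1 = k := Nat.sub_add_cancel hk
      have : 2 ^ (k + 1 - 1) = 2 ^ (k - 1) * 2 := by
        rw [Nat.add_sub_cancel]
        nth_rewrite 1 [← hk']
        rw [pow_succ]
      have h1 : 1 ≤ 2 ^ (k - 1) := Nat.one_le_two_pow
      omega
    by_cases hme : m = L 0 * P
    · refine ⟨1, fun _ => L, ?_, fun j i => ⟨hL i, le_refl _⟩, ?_⟩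
      · exact le_trans Nat.one_le_two_pow (le_refl _)
      · rw [Fin.sum_univ_one, hprod]; exact hme
    · have hmlt : m < L 0 * P := lt_of_le_of_ne (hprod ▸ hm) hme
      have hq : m / P < L 0 := Nat.div_lt_of_lt_mul (by rwa [mul_comm] at hmlt)
      have hs : m % P < P := Nat.mod_lt _ hPpos
      obtain ⟨r', f', hr', hf', hs'⟩ :=
        ih (fun i => L i.succ) (fun i => hL i.succ) (m % P) hs.le
      have hdm : P * (m / P) + m % P = m := Nat.div_add_mod m P
      rcases Nat.eq_zero_or_pos (m / P) with hq0 | hq1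
      · refine ⟨r', fun j => Fin.cons 1 (f' j), hr'.trans h2, ?_, ?_⟩
        · intro j i
          induction i using Fin.cases with
          | zero => exact ⟨le_refl 1, hL 0⟩
          | succ i => simpa using hf' j i
        · have hms : m = m % P := by rw [hq0, mul_zero] at hdm; omega
          rw [hms, hs']
          exact Finset.sum_congr rfl fun j _ => by
            rw [Fin.prod_univ_succ]; simp
      · refine ⟨r' + 1,
          Fin.cons (Fin.cons (m / P) fun i => L i.succ) (fun j => Fin.cons 1 (f' j)),
          by omega, ?_, ?_⟩
        · intro j i
          induction j using Fin.cases with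
          | zero =>
            induction i using Fin.cases with
            | zero => simpa using ⟨hq1, hq.le⟩
            | succ i =>
              simp only [Fin.cons_zero, Fin.cons_succ]
              exact ⟨hL i.succ, le_refl _⟩
          | succ j =>
            induction i using Fin.cases with
            | zero => simpa using Nat.succ_le_of_lt (hL 0)
            | succ i => simpa using hf' j i
        · rw [Fin.sum_univ_succ]
          have h1 : ∏ i, Fin.cons (α := fun _ => ℕ) (m / P)
              (fun i => L i.succ) i = (m / P) * P := by
            rw [Fin.prod_univ_succ]; simp [hP]
          have h2' : ∀ j : Fin r',
              ∏ i, Fin.cons (α := fun _ => ℕ) 1 (f' j) i = ∏ i, f' j i := by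
            intro j; rw [Fin.prod_univ_succ]; simp
          simp only [Fin.cons_zero, Fin.cons_succ, h1, h2']
          rw [mul_comm, ← hs']
          exact hdm.symm

/-- Every nonnegative integer at most `L₁ ⋯ L_k` is the sum of at most `2^{k−1}` numbers
of the form `l₁ ⋯ l_k` with `1 ≤ lᵢ ≤ Lᵢ` for each `i`. -/
theorem stmt8 (k : ℕ) (hk : 1 ≤ k) (L : Fin k → ℕ) (hL : ∀ i, 0 < L i)
    (m : ℕ) (hm : m ≤ ∏ i, L i) :
    ∃ (r : ℕ) (f : Fin r → Fin k → ℕ), r ≤ 2 ^ (k - 1) ∧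
      (∀ j i, 1 ≤ f j i ∧ f j i ≤ L i) ∧ m = ∑ j, ∏ i, f j i :=
  stmt8_aux k hk L hL m hm
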